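/- (Average tender measurement lemma, operation form.) Let {ρ_a : a ∈ A} be a finite family of density operators on a finite-dimensional complex Hilbert space H, let {D_b : b ∈ B} be a POVM on H, let φ : A → B be any map, let P be a probability distribution on A, and let ε̄ > 0 satisfy Σ_{a∈A} P(a)(1 − Tr(ρ_a D_{φ(a)})) ≤ ε̄. Then the quantum operation δ(ρ) = Σ_{b∈B} √(D_b) ρ √(D_b) satisfies Σ_{a∈A} P(a) ‖ρ_a − δ(ρ_a)‖₁ ≤ √(8ε̄) + ε̄. -/

import Mathlib

open scoped ComplexOrder
noncomputable section

/-- The square root of a positive semidefinite matrix, as defined in the older Mathlib. -/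
def Matrix.PosSemidef.sqrt {n : Type*} [Fintype n] [DecidableEq n] {A : Matrix n n ℂ}
    (hA : A.PosSemidef) : Matrix n n ℂ :=
  hA.1.eigenvectorUnitary.1 * Matrix.diagonal ((↑) ∘ (√·) ∘ hA.1.eigenvalues) *
    (star hA.1.eigenvectorUnitary : Matrix n n ℂ)

def traceNorm {n : Type*} [Fintype n] [DecidableEq n] (A : Matrix n n ℂ) : ℝ :=
  ((Matrix.posSemidef_conjTranspose_mul_self A).sqrt).trace.re

def IsDensity {n : Type*} [Fintype n] (ρ : Matrix n n ℂ) : Prop :=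
  ρ.PosSemidef ∧ ρ.trace = 1

def IsProb {A : Type*} [Fintype A] (P : A → ℝ) : Prop :=
  (∀ a, 0 ≤ P a) ∧ ∑ a, P a = 1

open scoped MatrixOrder in
lemma Matrix.PosSemidef.sqrt_eq_cfcSqrt {n : Type*} [Fintype n] [DecidableEq n] {A : Matrix n n ℂ}
    (hA : A.PosSemidef) : hA.sqrt = CFC.sqrt A := by
  rw [CFC.sqrt_eq_cfc, cfc_nnreal_eq_real _ A hA.nonneg, hA.1.cfc_eq]
  simp only [Matrix.IsHermitian.cfc, Unitary.conjStarAlgAut_apply, Matrix.PosSemidef.sqrt]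
  congr 2
  congr 1
  funext i
  simp [Real.coe_toNNReal', max_eq_left (hA.eigenvalues_nonneg i)]

open scoped MatrixOrder in
lemma Matrix.PosSemidef.posSemidef_sqrt {n : Type*} [Fintype n] [DecidableEq n]
    {A : Matrix n n ℂ} (hA : A.PosSemidef) : hA.sqrt.PosSemidef := by
  rw [hA.sqrt_eq_cfcSqrt]; exact Matrix.nonneg_iff_posSemidef.mp (CFC.sqrt_nonneg A)

open scoped MatrixOrder in
lemma Matrix.PosSemidef.sqrt_mul_self {n : Type*} [Fintype n] [DecidableEq n]
    {A : Matrix n n ℂ} (hA : A.PosSemidef) : hA.sqrt * hA.sqrt = A := by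
  rw [hA.sqrt_eq_cfcSqrt]; exact CFC.sqrt_mul_sqrt_self A hA.nonneg

open scoped MatrixOrder in
lemma Matrix.PosSemidef.eq_sqrt_of_sq_eq {n : Type*} [Fintype n] [DecidableEq n]
    {A B : Matrix n n ℂ} (hA : A.PosSemidef) (hB : B.PosSemidef) (hAB : A ^ 2 = B) :
    A = hB.sqrt := by
  rw [hB.sqrt_eq_cfcSqrt, eq_comm, CFC.sqrt_eq_iff _ _ hB.nonneg hA.nonneg, ← hAB, sq]

open Matrix
set_option linter.unusedSectionVars false
section Aux
variable {n : Type*} [Fintype n] [DecidableEq n]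


lemma psd_diag_nonneg {M : Matrix n n ℂ} (hM : M.PosSemidef) (i : n) : 0 ≤ M i i := by
  have h := hM.dotProduct_mulVec_nonneg (Pi.single i 1)
  simpa [Matrix.mulVec_single, dotProduct, Pi.single_apply, apply_ite] using h

lemma psd_trace_re_nonneg {M : Matrix n n ℂ} (hM : M.PosSemidef) : 0 ≤ M.trace.re := by
  rw [Matrix.trace, Complex.re_sum]
  exact Finset.sum_nonneg fun i _ => (Complex.le_def.mp (psd_diag_nonneg hM i)).1

lemma trace_mul_psd_nonneg {A B : Matrix n n ℂ} (hA : A.PosSemidef) (hB : B.PosSemidef) :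
    0 ≤ ((A * B).trace).re := by
  have h1 : (A * B).trace = (hB.sqrt * A * hB.sqrt).trace := by
    rw [Matrix.trace_mul_cycle, Matrix.mul_assoc, ← Matrix.mul_assoc, hB.sqrt_mul_self]
    rw [Matrix.trace_mul_comm]
  have h2 : (hB.sqrt * A * hB.sqrt).PosSemidef := by
    have := hA.mul_mul_conjTranspose_same hB.sqrt
    rwa [hB.posSemidef_sqrt.1.eq] at this
  rw [h1]; exact psd_trace_re_nonneg h2


lemma star_mul_self_re (z : ℂ) : (star z * z).re = ‖z‖ ^ 2 := by
  rw [Complex.star_def, mul_comm, Complex.mul_conj, ← Complex.normSq_eq_norm_sq]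
  simp

lemma trace_conjTranspose_mul_re (M : Matrix n n ℂ) :
    ((Mᴴ * M).trace).re = ∑ p : n × n, ‖M p.1 p.2‖ ^ 2 := by
  rw [Matrix.trace]
  simp only [Matrix.diag, Matrix.mul_apply, Matrix.conjTranspose_apply, Complex.re_sum,
    star_mul_self_re]
  rw [Fintype.sum_prod_type]
  exact Finset.sum_comm

lemma trace_cs (M N : Matrix n n ℂ) :
    ‖(Mᴴ * N).trace‖ ≤
      Real.sqrt ((Mᴴ * M).trace.re) * Real.sqrt ((Nᴴ * N).trace.re) := by
  rw [trace_conjTranspose_mul_re, trace_conjTranspose_mul_re]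
  calc ‖(Mᴴ * N).trace‖
      ≤ ∑ p : n × n, ‖M p.1 p.2‖ * ‖N p.1 p.2‖ := by
        rw [Matrix.trace]
        refine (norm_sum_le _ _).trans ?_
        simp only [Matrix.diag, Matrix.mul_apply, Matrix.conjTranspose_apply]
        calc ∑ i, ‖∑ j, star (M j i) * N j i‖
            ≤ ∑ i, ∑ j, ‖star (M j i) * N j i‖ :=
              Finset.sum_le_sum fun i _ => norm_sum_le _ _
          _ = ∑ p : n × n, ‖M p.1 p.2‖ * ‖N p.1 p.2‖ := by
              rw [Fintype.sum_prod_type, Finset.sum_comm]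
              simp [Complex.star_def, norm_mul, Complex.norm_conj]
    _ ≤ Real.sqrt (∑ p : n × n, ‖M p.1 p.2‖ ^ 2) *
        Real.sqrt (∑ p : n × n, ‖N p.1 p.2‖ ^ 2) :=
      Real.sum_mul_le_sqrt_mul_sqrt _ _ _



section herm
variable {X : Matrix n n ℂ} (hX : X.IsHermitian)

local notation "W" => (Matrix.IsHermitian.eigenvectorUnitary hX : Matrix n n ℂ)
local notation "lam" => Matrix.IsHermitian.eigenvalues hX

lemma WsW : star W * W = 1 := Matrix.UnitaryGroup.star_mul_self _

lemma conj_diag_mul (c e : n → ℂ) :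
    (W * diagonal c * star W) * (W * diagonal e * star W)
      = W * diagonal (c * e) * star W := by
  simp only [Matrix.mul_assoc]
  rw [← Matrix.mul_assoc (star W) W, WsW, Matrix.one_mul,
    ← Matrix.mul_assoc (diagonal c), Matrix.diagonal_mul_diagonal]
  rfl

lemma conj_diag_psd (d : n → ℂ) (hd : ∀ i, 0 ≤ d i) :
    (W * diagonal d * star W).PosSemidef := by
  rw [Matrix.star_eq_conjTranspose]
  exact (Matrix.posSemidef_diagonal_iff.mpr hd).mul_mul_conjTranspose_same W

lemma conj_diag_trace (c : n → ℂ) : (W * diagonal c * star W).trace = ∑ i, c i := by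
  rw [Matrix.trace_mul_cycle, WsW, Matrix.one_mul, Matrix.trace_diagonal]

lemma sqrt_herm :
    (Matrix.posSemidef_conjTranspose_mul_self X).sqrt
      = W * diagonal (fun i => (RCLike.ofReal |lam i| : ℂ)) * star W := by
  have habs : ∀ i, (0:ℂ) ≤ (RCLike.ofReal |lam i| : ℂ) := fun i => by
    rw [RCLike.ofReal_nonneg]; exact abs_nonneg _
  refine (Matrix.PosSemidef.eq_sqrt_of_sq_eq (conj_diag_psd hX _ habs) _ ?_).symm
  rw [pow_two, conj_diag_mul hX, hX.eq]
  conv_rhs => rw [hX.spectral_theorem, Unitary.conjStarAlgAut_apply]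
  rw [conj_diag_mul hX]
  have hfun : ((fun i => (RCLike.ofReal |lam i| : ℂ)) * fun i => (RCLike.ofReal |lam i| : ℂ))
      = (RCLike.ofReal ∘ lam * RCLike.ofReal ∘ lam) := by
    funext i
    show (RCLike.ofReal |lam i| : ℂ) * RCLike.ofReal |lam i|
      = RCLike.ofReal (lam i) * RCLike.ofReal (lam i)
    rw [← RCLike.ofReal_mul, ← RCLike.ofReal_mul, abs_mul_abs_self]
  rw [hfun]

lemma tn_herm : traceNorm X = ∑ i, |lam i| := by
  rw [traceNorm, sqrt_herm hX, conj_diag_trace hX, Complex.re_sum]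
  exact Finset.sum_congr rfl fun i _ => Complex.ofReal_re _

lemma unitary_entry_abs_le {V : Matrix n n ℂ} (hV : V ∈ Matrix.unitaryGroup n ℂ)
    (i j : n) : ‖V i j‖ ≤ 1 := by
  have h : (V * star V) i i = 1 := by
    rw [(Matrix.mem_unitaryGroup_iff).mp hV]; simp
  rw [Matrix.mul_apply] at h
  have h2 : ∑ k, ‖V i k‖ ^ 2 = 1 := by
    have := congrArg Complex.re h
    rw [Complex.re_sum, Complex.one_re] at this
    rw [← this]
    exact Finset.sum_congr rfl fun k _ => by
      rw [Matrix.star_apply, Complex.star_def, Complex.mul_conj, ← Complex.normSq_eq_norm_sq]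
      simp
  have h3 : ‖V i j‖ ^ 2 ≤ 1 := by
    rw [← h2]
    exact Finset.single_le_sum (f := fun k => ‖V i k‖ ^ 2)
      (fun k _ => sq_nonneg _) (Finset.mem_univ j)
  nlinarith [norm_nonneg (V i j)]

include hX in
lemma tn_upper {U : Matrix n n ℂ} (hU : U ∈ Matrix.unitaryGroup n ℂ) :
    ((U * X).trace).re ≤ traceNorm X := by
  rw [tn_herm hX]
  conv_lhs => rw [hX.spectral_theorem, Unitary.conjStarAlgAut_apply]
  have hcyc : (U * (W * diagonal (RCLike.ofReal ∘ lam) * star W)).trace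
      = ((star W * U * W) * diagonal (RCLike.ofReal ∘ lam)).trace := by
    rw [← Matrix.mul_assoc, ← Matrix.mul_assoc, Matrix.trace_mul_cycle (U * W)]
    rw [← Matrix.mul_assoc (star W) U W]
  rw [hcyc]
  set V := star W * U * W with hVdef
  have hVmem : V ∈ Matrix.unitaryGroup n ℂ := by
    exact Submonoid.mul_mem _ (Submonoid.mul_mem _ (Unitary.star_mem
      (Matrix.IsHermitian.eigenvectorUnitary hX).2) hU)
      (Matrix.IsHermitian.eigenvectorUnitary hX).2
  rw [Matrix.trace, Complex.re_sum]
  refine Finset.sum_le_sum fun i _ => ?_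
  rw [Matrix.diag_apply, Matrix.mul_diagonal]
  calc (V i i * RCLike.ofReal (lam i)).re ≤ ‖V i i * RCLike.ofReal (lam i)‖ :=
        Complex.re_le_norm _
    _ = ‖V i i‖ * |lam i| := by
        rw [norm_mul]
        congr 1
        exact Complex.norm_real _
    _ ≤ 1 * |lam i| := by
        exact mul_le_mul_of_nonneg_right (unitary_entry_abs_le hVmem i i) (abs_nonneg _)
    _ = |lam i| := one_mul _

include hX in
lemma tn_exists : ∃ U ∈ Matrix.unitaryGroup n ℂ, ((U * X).trace).re = traceNorm X := by
  set s : n → ℂ := fun i => if lam i < 0 then (-1 : ℂ) else 1 with hs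
  have hsmem : diagonal s ∈ Matrix.unitaryGroup n ℂ := by
    rw [Matrix.mem_unitaryGroup_iff']
    rw [Matrix.star_eq_conjTranspose, Matrix.diagonal_conjTranspose, Matrix.diagonal_mul_diagonal]
    ext i j
    by_cases hij : i = j
    · subst hij
      by_cases hi : lam i < 0 <;> simp [Matrix.diagonal_apply, Matrix.one_apply, hs, hi]
    · simp [Matrix.diagonal_apply, Matrix.one_apply, hij]
  have hWmem := (Matrix.IsHermitian.eigenvectorUnitary hX).2
  refine ⟨W * diagonal s * star W, ?_, ?_⟩
  · exact Submonoid.mul_mem _ (Submonoid.mul_mem _ hWmem hsmem) (Unitary.star_mem hWmem)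
  · have hX2 : (W * diagonal s * star W) * X
        = W * diagonal (s * (RCLike.ofReal ∘ lam)) * star W := by
      calc (W * diagonal s * star W) * X
          = (W * diagonal s * star W) * (W * diagonal (RCLike.ofReal ∘ lam) * star W) := by
            rw [← Unitary.conjStarAlgAut_apply (S := ℂ) (x := diagonal (RCLike.ofReal ∘ lam)), ← hX.spectral_theorem]
        _ = W * diagonal (s * (RCLike.ofReal ∘ lam)) * star W := conj_diag_mul hX _ _
    rw [hX2, conj_diag_trace hX, tn_herm hX, Complex.re_sum]
    refine Finset.sum_congr rfl fun i _ => ?_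
    simp only [Pi.mul_apply, Function.comp_apply, hs]
    by_cases hi : lam i < 0
    · simp only [hi, if_true]
      rw [abs_of_neg hi]
      have : (-1 : ℂ) * RCLike.ofReal (lam i) = RCLike.ofReal (-(lam i)) := by
        push_cast; ring
      rw [this]; simp
    · simp only [hi, if_false, one_mul]
      rw [abs_of_nonneg (not_lt.mp hi)]; simp

end herm

lemma tn_triangle {X Y : Matrix n n ℂ} (hX : X.IsHermitian) (hY : Y.IsHermitian) :
    traceNorm (X + Y) ≤ traceNorm X + traceNorm Y := by
  obtain ⟨U, hU, hUeq⟩ := tn_exists (hX.add hY)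
  rw [← hUeq, Matrix.mul_add, Matrix.trace_add, Complex.add_re]
  exact add_le_add (tn_upper hX hU) (tn_upper hY hU)

lemma tn_psd {Y : Matrix n n ℂ} (hY : Y.PosSemidef) : traceNorm Y = Y.trace.re := by
  rw [traceNorm, ← hY.eq_sqrt_of_sq_eq (Matrix.posSemidef_conjTranspose_mul_self Y)
    (by rw [pow_two, hY.1.eq])]

lemma tn_neg_psd {Y : Matrix n n ℂ} (hY : Y.PosSemidef) : traceNorm (-Y) = Y.trace.re := by
  rw [traceNorm, ← hY.eq_sqrt_of_sq_eq (Matrix.posSemidef_conjTranspose_mul_self (-Y))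
    (by rw [pow_two, Matrix.conjTranspose_neg, hY.1.eq, Matrix.neg_mul, Matrix.mul_neg, neg_neg])]


lemma eig_le_one {E : Matrix n n ℂ} (hE : E.PosSemidef) (h1E : (1 - E).PosSemidef) (i : n) :
    hE.1.eigenvalues i ≤ 1 := by
  set v := hE.1.eigenvectorBasis i with hv
  have h0 := (Complex.le_def.mp (h1E.dotProduct_mulVec_nonneg ⇑v)).1
  rw [Matrix.sub_mulVec, Matrix.one_mulVec, dotProduct_sub, Complex.sub_re] at h0
  have he : hE.1.eigenvalues i = (dotProduct (star ⇑v) (E *ᵥ ⇑v)).re := by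
    have := hE.1.eigenvalues_eq i
    rw [this]
    rfl
  have hvv : (dotProduct (star ⇑v) ⇑v).re = 1 := by
    have hnorm : ‖v‖ = 1 := hE.1.eigenvectorBasis.orthonormal.1 i
    have h1 : (inner ℂ v v : ℂ) = dotProduct (star ⇑v) ⇑v := by
      rw [EuclideanSpace.inner_eq_star_dotProduct, dotProduct_comm]
    rw [← h1, inner_self_eq_norm_sq_to_K, hnorm]
    norm_num
  rw [hvv, ← he, Complex.zero_re] at h0
  linarith

lemma sqrt_sub_psd {E : Matrix n n ℂ} (hE : E.PosSemidef) (h1E : (1 - E).PosSemidef) :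
    (hE.sqrt - E).PosSemidef := by
  have hsq : hE.sqrt = (hE.1.eigenvectorUnitary : Matrix n n ℂ)
      * diagonal ((↑) ∘ Real.sqrt ∘ hE.1.eigenvalues)
      * star (hE.1.eigenvectorUnitary : Matrix n n ℂ) := rfl
  have hfun : (fun i => ((Real.sqrt (hE.1.eigenvalues i) - hE.1.eigenvalues i : ℝ) : ℂ))
      = fun i => ((↑) ∘ Real.sqrt ∘ hE.1.eigenvalues) i - (RCLike.ofReal ∘ hE.1.eigenvalues) i := by
    funext i
    simp [Function.comp, Complex.ofReal_sub]
  have key : (hE.1.eigenvectorUnitary : Matrix n n ℂ)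
      * diagonal (fun i => ((Real.sqrt (hE.1.eigenvalues i) - hE.1.eigenvalues i : ℝ) : ℂ))
      * star (hE.1.eigenvectorUnitary : Matrix n n ℂ) = hE.sqrt - E := by
    rw [hfun, ← Matrix.diagonal_sub, Matrix.mul_sub, Matrix.sub_mul, ← hsq,
      ← Unitary.conjStarAlgAut_apply (S := ℂ), ← hE.1.spectral_theorem]
  rw [← key]
  refine conj_diag_psd hE.1 _ fun i => ?_
  rw [Complex.zero_le_real]
  have h0 : 0 ≤ hE.1.eigenvalues i := hE.eigenvalues_nonneg i
  have h1 : hE.1.eigenvalues i ≤ 1 := eig_le_one hE h1E i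
  nlinarith [Real.sq_sqrt h0, Real.sqrt_nonneg (hE.1.eigenvalues i)]

lemma trace_UBCU {U B C : Matrix n n ℂ} (hUs : Uᴴ * U = 1) :
    ((U * B) * (C * Uᴴ)).trace = (B * C).trace := by
  rw [Matrix.trace_mul_comm,
    show (C * Uᴴ) * (U * B) = C * (Uᴴ * U) * B by simp only [Matrix.mul_assoc], hUs,
    Matrix.mul_one, Matrix.trace_mul_comm]

lemma gentle {ρ E : Matrix n n ℂ} (hρ : ρ.PosSemidef) (tρ : ρ.trace = 1)
    (hE : E.PosSemidef) (h1E : (1 - E).PosSemidef) :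
    traceNorm (ρ - hE.sqrt * ρ * hE.sqrt) ≤ 2 * Real.sqrt (1 - ((ρ * E).trace).re) := by
  set S := hE.sqrt with hSdef
  set R := hρ.sqrt with hRdef
  set τ := 1 - ((ρ * E).trace).re with hτdef
  have hS : S.PosSemidef := hE.posSemidef_sqrt
  have hR : R.PosSemidef := hρ.posSemidef_sqrt
  have hSS : S * S = E := hE.sqrt_mul_self
  have hRR : R * R = ρ := hρ.sqrt_mul_self
  have hSh : Sᴴ = S := hS.1
  have hRh : Rᴴ = R := hR.1
  have h1Sh : (1 - S)ᴴ = 1 - S := by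
    rw [Matrix.conjTranspose_sub, Matrix.conjTranspose_one, hSh]
  have htau0 : 0 ≤ τ := by
    have h := trace_mul_psd_nonneg hρ h1E
    rwa [Matrix.mul_sub, Matrix.mul_one, Matrix.trace_sub, Complex.sub_re, tρ,
      Complex.one_re] at h
  have hkey : ((ρ * ((1 - S) * (1 - S))).trace).re ≤ τ := by
    have hmat : ρ * (1 - E) = ρ * ((1 - S) * (1 - S)) + (ρ * (S - E) + ρ * (S - E)) := by
      rw [← hSS]; noncomm_ring
    have h3 : 0 ≤ ((ρ * (S - E)).trace).re := trace_mul_psd_nonneg hρ (sqrt_sub_psd hE h1E)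
    have h4 : ((ρ * (1 - E)).trace).re = τ := by
      rw [Matrix.mul_sub, Matrix.mul_one, Matrix.trace_sub, Complex.sub_re, tρ, Complex.one_re]
    rw [hmat, Matrix.trace_add, Matrix.trace_add, Complex.add_re, Complex.add_re] at h4
    linarith
  have hXh : (ρ - S * ρ * S).IsHermitian := by
    refine hρ.1.sub ?_
    have := Matrix.isHermitian_mul_mul_conjTranspose S hρ.1
    rwa [hSh] at this
  obtain ⟨U, hU, hUeq⟩ := tn_exists hXh
  have hUs : Uᴴ * U = 1 := by
    rw [← Matrix.star_eq_conjTranspose]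
    exact (Matrix.mem_unitaryGroup_iff').mp hU
  rw [← hUeq]
  have hdec : ρ - S * ρ * S = ρ * (1 - S) + (1 - S) * ρ * S := by noncomm_ring
  rw [hdec, Matrix.mul_add, Matrix.trace_add, Complex.add_re]
  have bound1 : ((U * (ρ * (1 - S))).trace).re ≤ Real.sqrt τ := by
    have hfact : U * (ρ * (1 - S)) = (R * Uᴴ)ᴴ * (R * (1 - S)) := by
      rw [Matrix.conjTranspose_mul, Matrix.conjTranspose_conjTranspose, hRh]
      simp only [Matrix.mul_assoc]
      rw [← Matrix.mul_assoc R R, hRR]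
    have hMM : (((R * Uᴴ)ᴴ * (R * Uᴴ)).trace).re = 1 := by
      rw [Matrix.conjTranspose_mul, Matrix.conjTranspose_conjTranspose, hRh,
        trace_UBCU hUs, hRR, tρ, Complex.one_re]
    have hNN : (((R * (1 - S))ᴴ * (R * (1 - S))).trace) = ((ρ * ((1 - S) * (1 - S))).trace) := by
      rw [Matrix.conjTranspose_mul, h1Sh, hRh,
        show (1 - S) * R * (R * (1 - S)) = (1 - S) * (R * R) * (1 - S) by
          simp only [Matrix.mul_assoc],
        hRR, Matrix.trace_mul_cycle, Matrix.trace_mul_comm]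
    calc ((U * (ρ * (1 - S))).trace).re ≤ ‖(U * (ρ * (1 - S))).trace‖ :=
          Complex.re_le_norm _
      _ ≤ Real.sqrt ((((R * Uᴴ)ᴴ * (R * Uᴴ)).trace).re)
          * Real.sqrt ((((R * (1 - S))ᴴ * (R * (1 - S))).trace).re) := by
          rw [hfact]; exact trace_cs _ _
      _ ≤ 1 * Real.sqrt τ := by
          rw [hMM, Real.sqrt_one, hNN]
          exact mul_le_mul_of_nonneg_left (Real.sqrt_le_sqrt hkey) zero_le_one
      _ = Real.sqrt τ := one_mul _
  have bound2 : ((U * ((1 - S) * ρ * S)).trace).re ≤ Real.sqrt τ := by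
    have hfact : U * ((1 - S) * ρ * S) = (R * (1 - S) * Uᴴ)ᴴ * (R * S) := by
      rw [Matrix.conjTranspose_mul, Matrix.conjTranspose_mul,
        Matrix.conjTranspose_conjTranspose, hRh, h1Sh]
      simp only [Matrix.mul_assoc]
      rw [← Matrix.mul_assoc R R, hRR]
    have hMM : (((R * (1 - S) * Uᴴ)ᴴ * (R * (1 - S) * Uᴴ)).trace)
        = ((ρ * ((1 - S) * (1 - S))).trace) := by
      rw [Matrix.conjTranspose_mul, Matrix.conjTranspose_mul,
        Matrix.conjTranspose_conjTranspose, hRh, h1Sh, trace_UBCU hUs,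
        show ((1 - S) * R) * (R * (1 - S)) = (1 - S) * (R * R) * (1 - S) by
          simp only [Matrix.mul_assoc],
        hRR, Matrix.trace_mul_cycle, Matrix.trace_mul_comm]
    have hNN : (((R * S)ᴴ * (R * S)).trace) = (ρ * E).trace := by
      rw [Matrix.conjTranspose_mul, hRh, hSh,
        show S * R * (R * S) = S * (R * R) * S by simp only [Matrix.mul_assoc],
        hRR, Matrix.trace_mul_cycle, hSS, Matrix.trace_mul_comm]
    calc ((U * ((1 - S) * ρ * S)).trace).re
        ≤ ‖(U * ((1 - S) * ρ * S)).trace‖ := Complex.re_le_norm _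
      _ ≤ Real.sqrt ((((R * (1 - S) * Uᴴ)ᴴ * (R * (1 - S) * Uᴴ)).trace).re)
          * Real.sqrt ((((R * S)ᴴ * (R * S)).trace).re) := by
          rw [hfact]; exact trace_cs _ _
      _ ≤ Real.sqrt τ * 1 := by
          rw [hMM, hNN]
          refine mul_le_mul (Real.sqrt_le_sqrt hkey) (Real.sqrt_le_one.mpr (by linarith))
            (Real.sqrt_nonneg _) (Real.sqrt_nonneg _)
      _ = Real.sqrt τ := mul_one _
  linarith

end Aux

theorem average_tender_measurement {d : ℕ} {A B : Type*} [Fintype A] [Fintype B]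
    (ρ : A → Matrix (Fin d) (Fin d) ℂ) (hρ : ∀ a, IsDensity (ρ a))
    (D : B → Matrix (Fin d) (Fin d) ℂ) (hD : ∀ b, (D b).PosSemidef)
    (hD1 : ∑ b, D b = 1) (φ : A → B) (P : A → ℝ) (hP : IsProb P)
    (ε : ℝ) (hε : 0 < ε)
    (h : ∑ a, P a * (1 - (((ρ a) * D (φ a)).trace).re) ≤ ε) :
    ∑ a, P a * traceNorm (ρ a - ∑ b, (hD b).sqrt * ρ a * (hD b).sqrt)
      ≤ Real.sqrt (8 * ε) + ε := by
  classical
  set g : A → ℝ := fun a => 1 - (((ρ a) * D (φ a)).trace).re with hg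
  have key : ∀ a, traceNorm (ρ a - ∑ b, (hD b).sqrt * ρ a * (hD b).sqrt)
      ≤ 2 * Real.sqrt (g a) + g a ∧ 0 ≤ g a := by
    intro a
    have hρa := (hρ a).1
    have tρa := (hρ a).2
    have hrest : (1 : Matrix (Fin d) (Fin d) ℂ) - D (φ a)
        = ∑ b ∈ Finset.univ.erase (φ a), D b := by
      have := Finset.add_sum_erase Finset.univ D (Finset.mem_univ (φ a))
      rw [hD1] at this
      rw [← this, add_sub_cancel_left]
    have h1E : ((1 : Matrix (Fin d) (Fin d) ℂ) - D (φ a)).PosSemidef := by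
      rw [hrest]
      exact Finset.sum_induction D (fun M => M.PosSemidef)
        (fun x y hx hy => hx.add hy) (Matrix.PosSemidef.zero) (fun b _ => hD b)
    have term_psd : ∀ b, ((hD b).sqrt * ρ a * (hD b).sqrt).PosSemidef := by
      intro b
      have := hρa.mul_mul_conjTranspose_same (hD b).sqrt
      rwa [(hD b).posSemidef_sqrt.1.eq] at this
    set Y : Matrix (Fin d) (Fin d) ℂ :=
      ∑ b ∈ Finset.univ.erase (φ a), (hD b).sqrt * ρ a * (hD b).sqrt with hYdef
    have hYpsd : Y.PosSemidef :=
      Finset.sum_induction _ (fun M : Matrix (Fin d) (Fin d) ℂ => M.PosSemidef)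
        (fun x y hx hy => hx.add hy) (Matrix.PosSemidef.zero) (fun b _ => term_psd b)
    have hsplit : ρ a - ∑ b, (hD b).sqrt * ρ a * (hD b).sqrt
        = (ρ a - (hD (φ a)).sqrt * ρ a * (hD (φ a)).sqrt) + (- Y) := by
      have := Finset.add_sum_erase Finset.univ
        (fun b => (hD b).sqrt * ρ a * (hD b).sqrt) (Finset.mem_univ (φ a))
      rw [← this, hYdef]
      abel
    have hXherm : (ρ a - (hD (φ a)).sqrt * ρ a * (hD (φ a)).sqrt).IsHermitian :=
      hρa.1.sub (term_psd (φ a)).1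
    have hg0 : 0 ≤ g a := by
      have hn := trace_mul_psd_nonneg hρa h1E
      rwa [Matrix.mul_sub, Matrix.mul_one, Matrix.trace_sub, Complex.sub_re, tρa,
        Complex.one_re] at hn
    have hYtr : Y.trace.re = g a := by
      have hterm : ∀ b, ((hD b).sqrt * ρ a * (hD b).sqrt).trace = (ρ a * D b).trace := by
        intro b
        rw [Matrix.trace_mul_cycle, (hD b).sqrt_mul_self, Matrix.trace_mul_comm]
      rw [hYdef, Matrix.trace_sum]
      rw [Finset.sum_congr rfl fun b _ => hterm b]
      rw [← Matrix.trace_sum, ← Matrix.mul_sum, ← hrest]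
      rw [Matrix.mul_sub, Matrix.mul_one, Matrix.trace_sub, Complex.sub_re, tρa,
        Complex.one_re]
    constructor
    · calc traceNorm (ρ a - ∑ b, (hD b).sqrt * ρ a * (hD b).sqrt)
          = traceNorm ((ρ a - (hD (φ a)).sqrt * ρ a * (hD (φ a)).sqrt) + (- Y)) := by
            rw [hsplit]
        _ ≤ traceNorm (ρ a - (hD (φ a)).sqrt * ρ a * (hD (φ a)).sqrt) + traceNorm (- Y) :=
            tn_triangle hXherm hYpsd.1.neg
        _ ≤ 2 * Real.sqrt (g a) + g a := by
            rw [tn_neg_psd hYpsd, hYtr]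
            exact add_le_add_left (gentle hρa tρa (hD (φ a)) h1E) _
    · exact hg0
  have hP0 := hP.1
  set t : ℝ := ∑ a, P a * g a with htdef
  have ht0 : 0 ≤ t := Finset.sum_nonneg fun a _ => mul_nonneg (hP0 a) (key a).2
  have htε : t ≤ ε := h
  have hcs : ∑ a, P a * Real.sqrt (g a) ≤ Real.sqrt t := by
    calc ∑ a, P a * Real.sqrt (g a)
        = ∑ a, Real.sqrt (P a) * Real.sqrt (P a * g a) := by
          refine Finset.sum_congr rfl fun a _ => ?_
          rw [Real.sqrt_mul (hP0 a), ← mul_assoc, Real.mul_self_sqrt (hP0 a)]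
      _ ≤ Real.sqrt (∑ a, P a) * Real.sqrt (∑ a, P a * g a) :=
          Real.sum_sqrt_mul_sqrt_le _ hP0 (fun a => mul_nonneg (hP0 a) (key a).2)
      _ = Real.sqrt t := by rw [hP.2, Real.sqrt_one, one_mul]
  calc ∑ a, P a * traceNorm (ρ a - ∑ b, (hD b).sqrt * ρ a * (hD b).sqrt)
      ≤ ∑ a, P a * (2 * Real.sqrt (g a) + g a) :=
        Finset.sum_le_sum fun a _ => mul_le_mul_of_nonneg_left (key a).1 (hP0 a)
    _ = 2 * (∑ a, P a * Real.sqrt (g a)) + t := by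
        rw [htdef, Finset.mul_sum, ← Finset.sum_add_distrib]
        exact Finset.sum_congr rfl fun a _ => by ring
    _ ≤ 2 * Real.sqrt t + t := by
        have := hcs
        linarith
    _ ≤ 2 * Real.sqrt ε + ε := by
        have := Real.sqrt_le_sqrt htε
        linarith
    _ ≤ Real.sqrt (8 * ε) + ε := by
        have h8 : 2 * Real.sqrt ε = Real.sqrt (4 * ε) := by
          rw [show (4:ℝ) = 2^2 by norm_num, Real.sqrt_mul (by positivity),
            Real.sqrt_sq (by norm_num)]
        rw [h8]
        have : Real.sqrt (4 * ε) ≤ Real.sqrt (8 * ε) := Real.sqrt_le_sqrt (by linarith)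
        linarith
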